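/- Let F be a field and A a finite-dimensional F-algebra (possibly non-unital) that is spanned, as an F-vector space, by its nilpotent elements. Then A is a nilpotent algebra; more precisely A^n = 0 where n = dim_F(A) + 1 and A^n denotes the set of products of n elements of A. In particular every element of A is nilpotent. (Wedderburn's Theorem.) -/

import Mathlib

/-- `nupow a m = a^(m+1)`, iterated product usable in a non-unital ring. -/
def nupow {A : Type*} [Mul A] (a : A) : ℕ → A
  | 0 => a
  | m + 1 => nupow a m * a

/-- Nilpotency for elements of a non-unital ring: some power `a^(m+1)` is zero. -/
def IsNilpotentNU {A : Type*} [Mul A] [Zero A] (a : A) : Prop :=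
  ∃ m : ℕ, nupow a m = 0

open Module LinearMap

section Burnside
variable {K : Type*} [Field K] {V : Type*} [AddCommGroup V] [Module K V]

/-- evaluation at x as a linear map on End -/
noncomputable def evx (x : V) : Module.End K V →ₗ[K] V where
  toFun f := f x
  map_add' f g := rfl
  map_smul' c f := rfl

lemma burnside_trans [FiniteDimensional K V]
    (S : Submodule K (Module.End K V))
    (hmul : ∀ s ∈ S, ∀ t ∈ S, s * t ∈ S)
    (hS : S ≠ ⊥)
    (hirr : ∀ W : Submodule K V, (∀ s ∈ S, ∀ x ∈ W, s x ∈ W) → W = ⊥ ∨ W = ⊤) :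
    ∀ x : V, x ≠ 0 → ∀ v : V, ∃ t ∈ S, t x = v := by
  intro x hx v
  -- common kernel
  set CK : Submodule K V :=
    { carrier := {v | ∀ s ∈ S, s v = 0}
      add_mem' := fun {a b} ha hb s hs => by simp [ha s hs, hb s hs]
      zero_mem' := fun s hs => by simp
      smul_mem' := fun c a ha s hs => by simp [ha s hs] } with hCK
  have hCKinv : ∀ s ∈ S, ∀ y ∈ CK, s y ∈ CK := by
    intro s hs y hy t ht
    have : (t * s) y = 0 := hy _ (hmul t ht s hs)
    simpa using this
  have hCKbot : CK = ⊥ := by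
    rcases hirr CK hCKinv with h | h
    · exact h
    · exfalso; apply hS
      rw [Submodule.eq_bot_iff]
      intro s hs
      ext y
      have : y ∈ CK := h ▸ Submodule.mem_top
      simpa using this s hs
  -- the orbit submodule
  set Sx : Submodule K V := S.map (evx x) with hSx
  have hSxinv : ∀ s ∈ S, ∀ y ∈ Sx, s y ∈ Sx := by
    intro s hs y hy
    rcases Submodule.mem_map.mp hy with ⟨t, ht, rfl⟩
    exact Submodule.mem_map.mpr ⟨s * t, hmul s hs t ht, rfl⟩
  have hSxtop : Sx = ⊤ := by
    rcases hirr Sx hSxinv with h | h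
    · exfalso
      apply hx
      have hxCK : x ∈ CK := by
        intro s hs
        have : s x ∈ Sx := Submodule.mem_map.mpr ⟨s, hs, rfl⟩
        rw [h] at this
        simpa using this
      rw [hCKbot] at hxCK
      simpa using hxCK
    · exact h
  have : v ∈ Sx := hSxtop ▸ Submodule.mem_top
  rcases Submodule.mem_map.mp this with ⟨t, ht, rfl⟩
  exact ⟨t, ht, rfl⟩

end Burnside

section Burnside2
variable {K : Type*} [Field K] {V : Type*} [AddCommGroup V] [Module K V]

lemma burnside [IsAlgClosed K] [FiniteDimensional K V]
    (S : Submodule K (Module.End K V))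
    (hmul : ∀ s ∈ S, ∀ t ∈ S, s * t ∈ S)
    (hS : S ≠ ⊥)
    (hirr : ∀ W : Submodule K V, (∀ s ∈ S, ∀ x ∈ W, s x ∈ W) → W = ⊥ ∨ W = ⊤) :
    S = ⊤ := by
  have htrans := burnside_trans S hmul hS hirr
  -- minimal rank elements
  set R : Set ℕ := {r | ∃ s ∈ S, s ≠ 0 ∧ finrank K (range s) = r} with hR
  have hRne : R.Nonempty := by
    rcases (Submodule.ne_bot_iff S).mp hS with ⟨s, hs, hs0⟩
    exact ⟨_, s, hs, hs0, rfl⟩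
  obtain ⟨s₀, hs₀S, hs₀0, hs₀r⟩ : ∃ s ∈ S, s ≠ 0 ∧ finrank K (range s) = sInf R :=
    Nat.sInf_mem hRne
  have hmin : ∀ g ∈ S, g ≠ 0 → sInf R ≤ finrank K (range g) := by
    intro g hg hg0
    exact Nat.sInf_le ⟨g, hg, hg0, rfl⟩
  -- rank of s₀ is 1
  have hrank1 : finrank K (range s₀) = 1 := by
    have h1le : 1 ≤ finrank K (range s₀) := by
      rw [Nat.one_le_iff_ne_zero]
      intro h0
      apply hs₀0
      rw [← LinearMap.range_eq_bot]
      exact Submodule.finrank_eq_zero.mp h0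
    by_contra hne
    have h2le : 2 ≤ finrank K (range s₀) := by omega
    obtain ⟨x₁, hx₁⟩ : ∃ x, s₀ x ≠ 0 := by
      by_contra hall
      push_neg at hall
      exact hs₀0 (LinearMap.ext fun x => by simp [hall x])
    obtain ⟨x₂, hx₂⟩ : ∃ x₂, s₀ x₂ ∉ Submodule.span K {s₀ x₁} := by
      by_contra hall
      push_neg at hall
      have hle : range s₀ ≤ Submodule.span K {s₀ x₁} := by
        rintro y ⟨x, rfl⟩
        exact hall x
      have := Submodule.finrank_mono hle
      rw [finrank_span_singleton hx₁] at this
      omega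
    obtain ⟨t, htS, ht⟩ := htrans (s₀ x₁) hx₁ x₂
    set U : Submodule K V := range s₀ with hU
    have hUinv : ∀ y ∈ U, (s₀ * t) y ∈ U := fun y _ => LinearMap.mem_range_self _ _
    set h : Module.End K ↥U := (s₀ * t).restrict hUinv with hh
    have : Nontrivial ↥U := by
      refine nontrivial_of_ne ⟨s₀ x₁, LinearMap.mem_range_self _ _⟩ 0 ?_
      simp [Subtype.ext_iff, hx₁]
    obtain ⟨μ, hμ⟩ := Module.End.exists_eigenvalue h
    obtain ⟨u, hu⟩ := hμ.exists_hasEigenvector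
    set k : Module.End K V := s₀ * t - μ • 1 with hk
    set g : Module.End K V := s₀ * t * s₀ - μ • s₀ with hg
    have hgS : g ∈ S :=
      S.sub_mem (hmul _ (hmul s₀ hs₀S t htS) s₀ hs₀S) (S.smul_mem μ hs₀S)
    have hg0 : g = 0 := by
      by_contra hgne
      have hge := hmin g hgS hgne
      set k' : ↥U →ₗ[K] V := k.domRestrict U with hk'
      have hker : 0 < finrank K ↥(ker k') := by
        have humem : u ∈ ker k' := by
          have h1 : (s₀ * t) (u : V) = ((h u : ↥U) : V) := by
            rw [hh, LinearMap.restrict_apply]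
          have h2 : h u = μ • u := hu.apply_eq_smul
          simp [hk', hk, LinearMap.sub_apply, h1, h2]
        refine Submodule.one_le_finrank_iff.mpr (Submodule.ne_bot_iff _ |>.mpr ?_)
        exact ⟨u, humem, by simp [Subtype.ext_iff, hu.right]⟩
      have hrangele : range g ≤ U.map k := by
        rintro y ⟨x, rfl⟩
        have : g x = k (s₀ x) := by
          simp [hg, hk, LinearMap.sub_apply, Module.End.mul_apply]
        rw [this]
        exact Submodule.mem_map_of_mem (LinearMap.mem_range_self _ _)
      have hmapeq : U.map k = range k' := (LinearMap.range_domRestrict _ _).symm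
      have hrn : finrank K ↥(range k') + finrank K ↥(ker k') = finrank K ↥U :=
        LinearMap.finrank_range_add_finrank_ker k'
      have h1 : finrank K ↥(range g) ≤ finrank K ↥(range k') := by
        rw [← hmapeq]
        exact Submodule.finrank_mono hrangele
      rw [hs₀r] at hrn
      omega
    have : s₀ x₂ ∈ Submodule.span K {s₀ x₁} := by
      have h0 : g x₁ = 0 := by rw [hg0]; rfl
      have : s₀ x₂ = μ • s₀ x₁ := by
        have h1 : s₀ (t (s₀ x₁)) - μ • s₀ x₁ = 0 := by
          simpa [hg, LinearMap.sub_apply, Module.End.mul_apply] using h0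
        rw [ht] at h1
        linear_combination (norm := module) h1
      rw [this]
      exact Submodule.smul_mem _ _ (Submodule.mem_span_singleton_self _)
    exact hx₂ this
  -- rank one structure
  obtain ⟨x₀, hx₀⟩ : ∃ x, s₀ x ≠ 0 := by
    by_contra hall
    push_neg at hall
    exact hs₀0 (LinearMap.ext fun x => by simp [hall x])
  set w : V := s₀ x₀ with hwdef
  have hw : w ≠ 0 := hx₀
  have hspan : range s₀ = Submodule.span K {w} := by
    refine (Submodule.eq_of_le_of_finrank_le ?_ ?_).symm
    · rw [Submodule.span_le, Set.singleton_subset_iff]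
      exact LinearMap.mem_range_self _ _
    · rw [hrank1, finrank_span_singleton hw]
  have hmem : ∀ x, s₀ x ∈ Submodule.span K {w} := fun x =>
    hspan ▸ LinearMap.mem_range_self _ _
  set e := LinearEquiv.toSpanNonzeroSingleton K V w hw with he
  set φ : V →ₗ[K] K := e.symm.toLinearMap ∘ₗ (s₀.codRestrict (Submodule.span K {w}) hmem)
    with hφ
  have hphi : ∀ x, s₀ x = φ x • w := by
    intro x
    have h1 : (e (φ x) : V) = φ x • w := by
      rw [he]
      rfl
    have h2 : e (φ x) = s₀.codRestrict (Submodule.span K {w}) hmem x := by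
      rw [hφ]
      simp
    rw [← h1, h2]
    rfl
  have hφx₀ : φ x₀ ≠ 0 := by
    intro h0
    apply hw
    have := hphi x₀
    rw [h0, zero_smul] at this
    exact this
  have hsmulS : ∀ v : V, φ.smulRight v ∈ S := by
    intro v
    obtain ⟨t, htS, htw⟩ := htrans w hw v
    have heq : t * s₀ = φ.smulRight v := by
      ext x
      rw [Module.End.mul_apply, hphi x, map_smul, htw]
      rfl
    exact heq ▸ hmul t htS s₀ hs₀S
  set Φ : Submodule K (Module.Dual K V) := S.map (LinearMap.llcomp K V V K φ) with hΦ
  have hco : Φ.dualCoannihilator = ⊥ := by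
    rw [Submodule.eq_bot_iff]
    intro x hx
    by_contra hx0
    rw [Submodule.mem_dualCoannihilator] at hx
    obtain ⟨b, hbS, hb⟩ := htrans x hx0 x₀
    have : φ (b x) = 0 := by
      have := hx (LinearMap.llcomp K V V K φ b) (Submodule.mem_map_of_mem hbS)
      simpa using this
    rw [hb] at this
    exact hφx₀ this
  have hΦtop : Φ = ⊤ := by
    apply Submodule.eq_top_of_finrank_eq
    have h1 := Subspace.finrank_add_finrank_dualCoannihilator_eq Φ
    rw [hco] at h1
    simp only [finrank_bot, add_zero] at h1
    rw [h1, Subspace.dual_finrank_eq]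
  have hall : ∀ (f : Module.Dual K V) (v : V), f.smulRight v ∈ S := by
    intro f v
    have hf : f ∈ Φ := hΦtop ▸ Submodule.mem_top
    obtain ⟨b, hbS, hb⟩ := Submodule.mem_map.mp hf
    have heq : f.smulRight v = (φ.smulRight v) * b := by
      ext x
      have : f x = φ (b x) := by rw [← hb]; rfl
      simp [this]
    rw [heq]
    exact hmul _ (hsmulS v) b hbS
  -- conclude S = ⊤ via a basis
  rw [eq_top_iff]
  intro g _
  set b := Module.finBasis K V with hb
  have hg : g = ∑ i, (b.coord i).smulRight (g (b i)) := by
    ext x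
    rw [LinearMap.sum_apply]
    simp only [LinearMap.smulRight_apply, Basis.coord_apply]
    have h2 : ∑ i, (b.repr x) i • g (b i) = g (∑ i, (b.repr x) i • b i) := by
      rw [map_sum]
      simp
    rw [h2, b.sum_repr]
  rw [hg]
  exact Submodule.sum_mem _ fun i _ => hall _ _
end Burnside2

section OpLemma
variable {K : Type*} [Field K]

lemma traceZero_of_spanNilpotent {V : Type*} [AddCommGroup V] [Module K V]
    [FiniteDimensional K V] {N : Set (Module.End K V)}
    (hN : ∀ f ∈ N, IsNilpotent f) {s : Module.End K V}
    (hs : s ∈ Submodule.span K N) : trace K V s = 0 := by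
  have hle : Submodule.span K N ≤ ker (trace K V) := by
    rw [Submodule.span_le]
    intro f hf
    have h1 : IsNilpotent (trace K V f) := isNilpotent_trace_of_isNilpotent (hN f hf)
    simpa [LinearMap.mem_ker] using h1.eq_zero
  exact hle hs

lemma exists_trace_one {V : Type*} [AddCommGroup V] [Module K V]
    [FiniteDimensional K V] [Nontrivial V] :
    ∃ f : Module.End K V, trace K V f = 1 := by
  have hpos : 0 < finrank K V := finrank_pos
  set b := Module.finBasis K V with hb
  set i0 : Fin (finrank K V) := ⟨0, hpos⟩ with hi0
  refine ⟨(b.coord i0).smulRight (b i0), ?_⟩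
  have heq : (b.coord i0).smulRight (b i0) = dualTensorHom K V V ((b.coord i0) ⊗ₜ (b i0)) := by
    ext x
    simp [dualTensorHom_apply]
  rw [heq, trace_eq_contract_apply, contractLeft_apply, Basis.coord_apply, Basis.repr_self]
  simp

end OpLemma

universe v in
lemma opLemma {K : Type*} [Field K] [IsAlgClosed K] :
    ∀ (n : ℕ) (V : Type v) [AddCommGroup V] [Module K V] [FiniteDimensional K V],
      finrank K V ≤ n →
      ∀ S : Submodule K (Module.End K V),
        (∀ s ∈ S, ∀ t ∈ S, s * t ∈ S) →
        (∃ N : Set (Module.End K V), (∀ f ∈ N, IsNilpotent f) ∧ Submodule.span K N = S) →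
        ∀ l : List (Module.End K V), (∀ s ∈ l, s ∈ S) → finrank K V ≤ l.length →
          l.prod = 0 := by
  intro n
  induction n with
  | zero =>
    intro V _ _ _ hV S _ _ l _ _
    have h0 : finrank K V = 0 := le_antisymm hV (Nat.zero_le _)
    have : Subsingleton V := finrank_zero_iff.mp h0
    exact Subsingleton.elim _ _
  | succ n IH =>
    intro V _ _ _ hV S hmul hex l hlS hlen
    obtain ⟨N, hNnil, hNspan⟩ := hex
    by_cases hVn : finrank K V ≤ n
    · exact IH V hVn S hmul ⟨N, hNnil, hNspan⟩ l hlS hlen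
    have hfr : finrank K V = n + 1 := by omega
    by_cases hSbot : S = ⊥
    · match l, hlen with
      | [], hlen => simp [hfr] at hlen
      | s :: t, _ =>
        have hs : s ∈ S := hlS s (List.mem_cons_self ..)
        rw [hSbot, Submodule.mem_bot] at hs
        rw [List.prod_cons, hs, zero_mul]
    by_cases hirr : ∀ W : Submodule K V, (∀ s ∈ S, ∀ x ∈ W, s x ∈ W) → W = ⊥ ∨ W = ⊤
    · exfalso
      have hStop := burnside S hmul hSbot hirr
      have hnontriv : Nontrivial V := by
        rw [← finrank_pos_iff (R := K)]
        omega
      obtain ⟨f, hf1⟩ := exists_trace_one (K := K) (V := V)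
      have hf0 : trace K V f = 0 := by
        refine traceZero_of_spanNilpotent hNnil ?_
        rw [hNspan, hStop]
        trivial
      rw [hf1] at hf0
      exact one_ne_zero hf0
    · push_neg at hirr
      obtain ⟨W, hWinv, hWne⟩ := hirr
      have hWbot : W ≠ ⊥ := hWne.1
      have hWtop : W ≠ ⊤ := hWne.2
      -- compression to W
      obtain ⟨W', hWc⟩ := Submodule.exists_isCompl W
      set π := W.projectionOnto W' hWc with hπ
      set c : Module.End K V →ₗ[K] Module.End K ↥W :=
        { toFun := fun f => (π ∘ₗ f) ∘ₗ W.subtype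
          map_add' := fun f g => by ext u; simp
          map_smul' := fun a f => by ext u; simp } with hc
      have hπW : ∀ y (hy : y ∈ W), ((π y : ↥W) : V) = y := by
        intro y hy
        have := Submodule.linearProjOfIsCompl_apply_left hWc ⟨y, hy⟩
        rw [show ((⟨y, hy⟩ : ↥W) : V) = y from rfl] at this
        rw [this]
      have hc1 : ∀ f, (∀ x ∈ W, f x ∈ W) → ∀ u : ↥W, ((c f) u : V) = f u := by
        intro f hf u
        have : (c f) u = π (f u) := rfl
        rw [this, hπW _ (hf _ u.2)]
      -- quotient map
      obtain ⟨σ, hσ⟩ := (W.mkQ).exists_rightInverse_of_surjective (by rw [Submodule.range_mkQ])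
      set q : Module.End K V →ₗ[K] Module.End K (V ⧸ W) :=
        { toFun := fun f => (W.mkQ ∘ₗ f) ∘ₗ σ
          map_add' := fun f g => by ext u; simp
          map_smul' := fun a f => by ext u; simp } with hq
      have hq1 : ∀ f, (∀ x ∈ W, f x ∈ W) → ∀ v : V, (q f) (W.mkQ v) = W.mkQ (f v) := by
        intro f hf v
        have h1 : (q f) (W.mkQ v) = W.mkQ (f (σ (W.mkQ v))) := rfl
        rw [h1]
        have h2 : W.mkQ (σ (W.mkQ v)) = W.mkQ v := by
          have := congrArg (fun g => g (W.mkQ v)) hσ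
          simpa using this
        rw [Submodule.mkQ_apply, Submodule.mkQ_apply, Submodule.Quotient.eq] at h2
        show Submodule.Quotient.mk _ = Submodule.Quotient.mk _
        rw [Submodule.Quotient.eq]
        have := hf _ h2
        simpa [map_sub] using this
      -- list transfer facts
      have hclist : ∀ (m : List (Module.End K V)), (∀ s ∈ m, s ∈ S) →
          ∀ u : ↥W, (((m.map c).prod) u : V) = m.prod (u : V) := by
        intro m
        induction m with
        | nil => intro _ u; simp
        | cons s m ihm =>
          intro hm u
          have hsS : s ∈ S := hm s (List.mem_cons_self ..)
          have hmS : ∀ x ∈ m, x ∈ S := fun x hx => hm x (List.mem_cons_of_mem _ hx)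
          rw [List.map_cons, List.prod_cons, List.prod_cons]
          rw [Module.End.mul_apply, Module.End.mul_apply]
          rw [hc1 s (hWinv s hsS)]
          rw [ihm hmS u]
      have hqlist : ∀ (m : List (Module.End K V)), (∀ s ∈ m, s ∈ S) →
          ∀ v : V, ((m.map q).prod) (W.mkQ v) = W.mkQ (m.prod v) := by
        intro m
        induction m with
        | nil => intro _ v; simp
        | cons s m ihm =>
          intro hm v
          have hsS : s ∈ S := hm s (List.mem_cons_self ..)
          have hmS : ∀ x ∈ m, x ∈ S := fun x hx => hm x (List.mem_cons_of_mem _ hx)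
          rw [List.map_cons, List.prod_cons, List.prod_cons]
          rw [Module.End.mul_apply, Module.End.mul_apply]
          rw [ihm hmS v, hq1 s (hWinv s hsS)]
      -- nilpotency transfer
      have hcpow : ∀ f, (∀ x ∈ W, f x ∈ W) → ∀ (k : ℕ) (u : ↥W),
          (((c f)^k) u : V) = (f^k) (u : V) := by
        intro f hf k
        induction k with
        | zero => intro u; simp
        | succ k ihk =>
          intro u
          rw [pow_succ', pow_succ']
          rw [Module.End.mul_apply, Module.End.mul_apply]
          have hfk : ∀ x ∈ W, (f^k) x ∈ W := by
            intro x hx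
            have : ((f^k) x : V) = (((c f)^k) ⟨x, hx⟩ : V) := (ihk ⟨x, hx⟩).symm
            rw [this]
            exact Submodule.coe_mem _
          rw [hc1 f hf, ihk u]
      have hqpow : ∀ f, (∀ x ∈ W, f x ∈ W) → ∀ (k : ℕ) (v : V),
          ((q f)^k) (W.mkQ v) = W.mkQ ((f^k) v) := by
        intro f hf k
        induction k with
        | zero => intro v; simp
        | succ k ihk =>
          intro v
          rw [pow_succ, pow_succ]
          rw [Module.End.mul_apply, Module.End.mul_apply]
          rw [hq1 f hf, ihk (f v)]
      have hcN : ∀ g ∈ c '' N, IsNilpotent g := by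
        rintro _ ⟨f, hfN, rfl⟩
        have hfS : f ∈ S := by rw [← hNspan]; exact Submodule.subset_span hfN
        obtain ⟨m, hm⟩ := hNnil f hfN
        refine ⟨m, ?_⟩
        refine LinearMap.ext fun u => Subtype.ext ?_
        have := hcpow f (hWinv f hfS) m u
        rw [hm] at this
        rw [this]
        simp
      have hqN : ∀ g ∈ q '' N, IsNilpotent g := by
        rintro _ ⟨f, hfN, rfl⟩
        have hfS : f ∈ S := by rw [← hNspan]; exact Submodule.subset_span hfN
        obtain ⟨m, hm⟩ := hNnil f hfN
        refine ⟨m, ?_⟩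
        refine LinearMap.ext fun x => ?_
        obtain ⟨v, rfl⟩ := Submodule.mkQ_surjective W x
        have := hqpow f (hWinv f hfS) m v
        rw [hm] at this
        simpa using this
      -- the mapped submodules
      have hcmul : ∀ x ∈ S.map c, ∀ y ∈ S.map c, x * y ∈ S.map c := by
        rintro _ ⟨s, hs, rfl⟩ _ ⟨t, ht, rfl⟩
        refine Submodule.mem_map.mpr ⟨s * t, hmul s hs t ht, ?_⟩
        refine LinearMap.ext fun u => Subtype.ext ?_
        rw [Module.End.mul_apply]
        rw [hc1 (s*t) (fun x hx => hWinv _ (hmul s hs t ht) x hx) u]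
        rw [hc1 s (hWinv s hs), hc1 t (hWinv t ht)]
        rfl
      have hqmul : ∀ x ∈ S.map q, ∀ y ∈ S.map q, x * y ∈ S.map q := by
        rintro _ ⟨s, hs, rfl⟩ _ ⟨t, ht, rfl⟩
        refine Submodule.mem_map.mpr ⟨s * t, hmul s hs t ht, ?_⟩
        refine LinearMap.ext fun x => ?_
        obtain ⟨v, rfl⟩ := Submodule.mkQ_surjective W x
        rw [Module.End.mul_apply, hq1 _ (fun y hy => hWinv _ (hmul s hs t ht) y hy) v,
          hq1 t (hWinv t ht) v, hq1 s (hWinv s hs) (t v)]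
        rfl
      have hcspan : Submodule.span K (c '' N) = S.map c := by
        rw [← hNspan, Submodule.map_span]
      have hqspan : Submodule.span K (q '' N) = S.map q := by
        rw [← hNspan, Submodule.map_span]
      -- dimension bookkeeping
      have hdW : finrank K ↥W < finrank K V := Submodule.finrank_lt hWtop
      have hWpos : 0 < finrank K ↥W := Submodule.one_le_finrank_iff.mpr hWbot
      have hsum : finrank K (V ⧸ W) + finrank K ↥W = finrank K V :=
        Submodule.finrank_quotient_add_finrank W
      set dQ := finrank K (V ⧸ W) with hdQdef
      set dW := finrank K ↥W with hdWdef
      -- split the list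
      set l₁ := l.take (l.length - dQ) with hl₁
      set l₂ := l.drop (l.length - dQ) with hl₂
      have hl₂len : l₂.length = dQ := by
        rw [hl₂, List.length_drop]
        omega
      have hl₁len : dW ≤ l₁.length := by
        rw [hl₁, List.length_take]
        omega
      have hl₁S : ∀ s ∈ l₁, s ∈ S := fun s hs => hlS s (List.mem_of_mem_take hs)
      have hl₂S : ∀ s ∈ l₂, s ∈ S := fun s hs => hlS s (List.mem_of_mem_drop hs)
      -- apply IH on quotient
      have hq0 : (l₂.map q).prod = 0 := by
        refine IH (V ⧸ W) (by omega) (S.map q) hqmul ⟨q '' N, hqN, hqspan⟩ (l₂.map q) ?_ ?_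
        · rintro _ hs
          obtain ⟨s, hs₂, rfl⟩ := List.mem_map.mp hs
          exact Submodule.mem_map_of_mem (hl₂S s hs₂)
        · rw [List.length_map, hl₂len]
      have hc0 : (l₁.map c).prod = 0 := by
        refine IH ↥W (by omega) (S.map c) hcmul ⟨c '' N, hcN, hcspan⟩ (l₁.map c) ?_ ?_
        · rintro _ hs
          obtain ⟨s, hs₁, rfl⟩ := List.mem_map.mp hs
          exact Submodule.mem_map_of_mem (hl₁S s hs₁)
        · rw [List.length_map]; exact hl₁len
      have hl₂W : ∀ v : V, l₂.prod v ∈ W := by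
        intro v
        have h1 := hqlist l₂ hl₂S v
        rw [hq0] at h1
        have h2 : W.mkQ (l₂.prod v) = 0 := by
          rw [← h1]; rfl
        rwa [Submodule.mkQ_apply, Submodule.Quotient.mk_eq_zero] at h2
      have hl₁0 : ∀ u : ↥W, l₁.prod (u : V) = 0 := by
        intro u
        have h1 := hclist l₁ hl₁S u
        rw [hc0] at h1
        rw [← h1]
        rfl
      have hsplit : l₁ ++ l₂ = l := List.take_append_drop _ _
      rw [← hsplit, List.prod_append]
      ext v
      rw [Module.End.mul_apply]
      have := hl₁0 ⟨l₂.prod v, hl₂W v⟩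
      simpa using this

section LemW
variable {K : Type*} [Field K] [IsAlgClosed K] {B : Type*} [NonUnitalRing B]
    [Module K B] [SMulCommClass K B B] [IsScalarTower K B B] [FiniteDimensional K B]

lemma lemW (hspan : Submodule.span K {a : B | IsNilpotentNU a} = ⊤) :
    ∀ (l : List B) (a : B), finrank K B ≤ l.length → l.foldl (· * ·) a = 0 := by
  set Rlin : B →ₗ[K] Module.End K B := (LinearMap.mul K B).flip with hRlin
  have hRapp : ∀ (a x : B), Rlin a x = x * a := fun a x => rfl
  have hmulR : ∀ a b : B, Rlin a * Rlin b = Rlin (b * a) := by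
    intro a b
    ext x
    rw [Module.End.mul_apply, hRapp, hRapp, hRapp, mul_assoc]
  have hpow : ∀ (a : B) (k : ℕ), (Rlin a)^(k+1) = Rlin (nupow a k) := by
    intro a k
    induction k with
    | zero => rw [pow_one]; rfl
    | succ k ihk =>
      rw [pow_succ', ihk, hmulR]
      rfl
  have hnil : ∀ a : B, IsNilpotentNU a → IsNilpotent (Rlin a) := by
    rintro a ⟨m, hm⟩
    exact ⟨m + 1, by rw [hpow, hm, map_zero]⟩
  set S : Submodule K (Module.End K B) := LinearMap.range Rlin with hS
  have hSmul : ∀ s ∈ S, ∀ t ∈ S, s * t ∈ S := by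
    rintro _ ⟨a, rfl⟩ _ ⟨b, rfl⟩
    exact ⟨b * a, (hmulR a b).symm⟩
  have hSspan : Submodule.span K (Rlin '' {a : B | IsNilpotentNU a}) = S := by
    rw [← Submodule.map_span, hspan, Submodule.map_top]
  have hex : ∃ N : Set (Module.End K B),
      (∀ f ∈ N, IsNilpotent f) ∧ Submodule.span K N = S := by
    refine ⟨Rlin '' {a : B | IsNilpotentNU a}, ?_, hSspan⟩
    rintro _ ⟨a, ha, rfl⟩
    exact hnil a ha
  have hfold : ∀ (l : List B) (a : B),
      l.foldl (· * ·) a = ((l.map Rlin).reverse).prod a := by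
    intro l
    induction l with
    | nil => intro a; simp
    | cons b l ihl =>
      intro a
      rw [List.foldl_cons, ihl (a * b), List.map_cons, List.reverse_cons, List.prod_append,
        List.prod_singleton, Module.End.mul_apply, hRapp]
  intro l a hlen
  rw [hfold]
  have h0 : ((l.map Rlin).reverse).prod = 0 := by
    refine opLemma (finrank K B) B le_rfl S hSmul hex _ ?_ ?_
    · intro s hs
      rw [List.mem_reverse] at hs
      obtain ⟨b, _, rfl⟩ := List.mem_map.mp hs
      exact ⟨b, rfl⟩
    · rw [List.length_reverse, List.length_map]
      exact hlen
  rw [h0]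
  rfl
end LemW


open TensorProduct in
/-- Wedderburn's Theorem: a finite-dimensional (possibly
non-unital) `F`-algebra spanned by its nilpotent elements is nilpotent; more
precisely every product of `n = dim A + 1` elements vanishes, and in particular
every element is nilpotent. -/
theorem stmt12 {F A : Type*} [Field F] [NonUnitalRing A] [Module F A]
    [SMulCommClass F A A] [IsScalarTower F A A] [FiniteDimensional F A]
    (hspan : Submodule.span F {a : A | IsNilpotentNU a} = ⊤) :
    (∀ a : ℕ → A,
      (List.range (Module.finrank F A)).foldl (fun x i => x * a (i + 1)) (a 0) = 0) ∧
    ∀ a : A, IsNilpotentNU a := by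
  classical
  set K := AlgebraicClosure F with hK
  haveI hfin : FiniteDimensional K (K ⊗[F] A) := Module.Finite.base_change F K A
  have hfr : finrank K (K ⊗[F] A) = finrank F A := Module.finrank_baseChange ..
  set ι : A →ₗ[F] K ⊗[F] A := TensorProduct.mk F K A 1 with hι
  have hιapp : ∀ a : A, ι a = (1 : K) ⊗ₜ[F] a := fun a => rfl
  have hιmul : ∀ a b : A, ι (a * b) = ι a * ι b := by
    intro a b
    rw [hιapp, hιapp, hιapp, Algebra.TensorProduct.tmul_mul_tmul, one_mul]
  have hinj : Function.Injective ι := by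
    have h1 : Function.Injective (Algebra.linearMap F K) := fun x y h => by
      exact (algebraMap F K).injective (by simpa using h)
    have h2 := Module.Flat.rTensor_preserves_injective_linearMap (M := A)
      (Algebra.linearMap F K) h1
    have h3 : ∀ a : A, (LinearMap.rTensor A (Algebra.linearMap F K))
        ((TensorProduct.lid F A).symm a) = ι a := by
      intro a
      rw [TensorProduct.lid_symm_apply, LinearMap.rTensor_tmul, hιapp]
      simp
    intro a b hab
    have := h2 (by rw [h3 a, h3 b, hab] : (LinearMap.rTensor A (Algebra.linearMap F K))
      ((TensorProduct.lid F A).symm a) = (LinearMap.rTensor A (Algebra.linearMap F K))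
      ((TensorProduct.lid F A).symm b))
    exact (TensorProduct.lid F A).symm.injective this
  have hnup : ∀ (a : A) (k : ℕ), nupow (ι a) k = ι (nupow a k) := by
    intro a k
    induction k with
    | zero => rfl
    | succ k ihk =>
      show nupow (ι a) k * ι a = ι (nupow a k * a)
      rw [ihk, hιmul]
  have hnil : ∀ a : A, IsNilpotentNU a → IsNilpotentNU (ι a) := by
    rintro a ⟨m, hm⟩
    exact ⟨m, by rw [hnup, hm, map_zero]⟩
  have hspanB : Submodule.span K {b : K ⊗[F] A | IsNilpotentNU b} = ⊤ := by
    have haspan : ∀ a : A, ι a ∈ Submodule.span K (ι '' {a : A | IsNilpotentNU a}) := by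
      intro a
      set U : Submodule F A := Submodule.comap ι
        ((Submodule.span K (ι '' {a : A | IsNilpotentNU a})).restrictScalars F) with hU
      have hNA : {a : A | IsNilpotentNU a} ⊆ U := by
        intro x hx
        exact Submodule.subset_span ⟨x, hx, rfl⟩
      have : (⊤ : Submodule F A) ≤ U := by
        rw [← hspan, Submodule.span_le]
        exact hNA
      exact this Submodule.mem_top
    rw [eq_top_iff]
    rintro x -
    have hx : x ∈ Submodule.span K (ι '' {a : A | IsNilpotentNU a}) := by
      induction x using TensorProduct.induction_on with
      | zero => exact Submodule.zero_mem _
      | tmul k a =>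
        have : (k : K) ⊗ₜ[F] a = k • ((1 : K) ⊗ₜ[F] a) := by
          rw [TensorProduct.smul_tmul', smul_eq_mul, mul_one]
        rw [this]
        exact Submodule.smul_mem _ k (haspan a)
      | add x y hx hy => exact Submodule.add_mem _ hx hy
    refine Submodule.span_le.mpr ?_ hx
    rintro _ ⟨a, ha, rfl⟩
    exact Submodule.subset_span (hnil a ha)
  -- main product-vanishing statement in A
  have main : ∀ (l : List A) (a : A), finrank F A ≤ l.length → l.foldl (· * ·) a = 0 := by
    have hfoldι : ∀ (l : List A) (a : A),
        ι (l.foldl (· * ·) a) = (l.map ι).foldl (· * ·) (ι a) := by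
      intro l
      induction l with
      | nil => intro a; rfl
      | cons b l ihl =>
        intro a
        rw [List.foldl_cons, List.map_cons, List.foldl_cons, ihl (a * b), hιmul]
    intro l a hlen
    apply hinj
    rw [map_zero, hfoldι]
    refine lemW hspanB (l.map ι) (ι a) ?_
    rw [List.length_map, hfr]
    exact hlen
  constructor
  · intro a
    have h1 : (List.range (finrank F A)).foldl (fun x i => x * a (i + 1)) (a 0)
        = ((List.range (finrank F A)).map (fun i => a (i + 1))).foldl (· * ·) (a 0) := by
      rw [List.foldl_map]
    rw [h1]
    refine main _ _ ?_
    rw [List.length_map, List.length_range]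
  · intro a
    refine ⟨finrank F A, ?_⟩
    have hrep : ∀ k : ℕ, (List.replicate k a).foldl (· * ·) a = nupow a k := by
      intro k
      induction k with
      | zero => rfl
      | succ k ihk =>
        rw [List.replicate_succ', List.foldl_append, ihk]
        rfl
    rw [← hrep]
    refine main _ _ ?_
    rw [List.length_replicate]
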